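/- Two relational COUNT-queries are equivalent if and only if they are isomorphic. -/

import Mathlib

namespace CQ

/-! ### Variables, terms, comparisons, atoms, bodies, databases -/

abbrev Var := ℕ

inductive Term where
  | var : Var → Term
  | const : ℚ → Term
deriving DecidableEq

def Term.eval (γ : Var → ℚ) : Term → ℚ
  | .var v => γ v
  | .const c => c

def Term.vars : Term → Finset Var
  | .var v => {v}
  | .const _ => ∅

def Term.subst (θ : Var → Term) : Term → Term
  | .var v => θ v
  | .const c => .const c

def Term.rename (f : Var → Var) : Term → Term
  | .var v => .var (f v)
  | .const c => .const c

def termListVars (l : List Term) : Finset Var := l.foldr (fun t s => t.vars ∪ s) ∅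

inductive CompOp where
  | lt | le | eq | ne
deriving DecidableEq

structure Comp where
  lhs : Term
  op : CompOp
  rhs : Term
deriving DecidableEq

def Comp.holds (γ : Var → ℚ) (c : Comp) : Prop :=
  match c.op with
  | .lt => c.lhs.eval γ < c.rhs.eval γ
  | .le => c.lhs.eval γ ≤ c.rhs.eval γ
  | .eq => c.lhs.eval γ = c.rhs.eval γ
  | .ne => c.lhs.eval γ ≠ c.rhs.eval γ

def Comp.vars (c : Comp) : Finset Var := c.lhs.vars ∪ c.rhs.vars

def Comp.subst (θ : Var → Term) (c : Comp) : Comp := ⟨c.lhs.subst θ, c.op, c.rhs.subst θ⟩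

/-- `γ` satisfies all comparisons in `C`. -/
def holdsAll (γ : Var → ℚ) (C : Finset Comp) : Prop := ∀ c ∈ C, c.holds γ

/-- the set of comparisons `C` entails the set of comparisons `C'`. -/
def entails (C C' : Finset Comp) : Prop := ∀ γ : Var → ℚ, holdsAll γ C → holdsAll γ C'

def compsVars (C : Finset Comp) : Finset Var := C.sup Comp.vars

def Term.consts : Term → Finset ℚ
  | .var _ => ∅
  | .const c => {c}

def compsConsts (C : Finset Comp) : Finset ℚ := C.sup (fun c => c.lhs.consts ∪ c.rhs.consts)

/-- A term over the variable set `S` and constant set `K`. -/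
def TermOver (S : Finset Var) (K : Finset ℚ) : Term → Prop
  | .var v => v ∈ S
  | .const c => c ∈ K

/-- A set of comparisons is deductively closed if it contains every comparison over
its variables and constants that it entails. -/
def DeductivelyClosed (C : Finset Comp) : Prop :=
  ∀ c : Comp, TermOver (compsVars C) (compsConsts C) c.lhs →
    TermOver (compsVars C) (compsConsts C) c.rhs → entails C {c} → c ∈ C

def SatisfiableComps (C : Finset Comp) : Prop := ∃ γ : Var → ℚ, holdsAll γ C

structure Atom (Rel : Type) where
  rel : Rel
  args : List Term
deriving DecidableEq

variable {Rel : Type} [DecidableEq Rel] {ι : Type} [DecidableEq ι]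

def Atom.vars (a : Atom Rel) : Finset Var := termListVars a.args
def Atom.subst (θ : Var → Term) (a : Atom Rel) : Atom Rel := ⟨a.rel, a.args.map (Term.subst θ)⟩
def Atom.rename (f : Var → Var) (a : Atom Rel) : Atom Rel := ⟨a.rel, a.args.map (Term.rename f)⟩

def atomsVars (R : Finset (Atom Rel)) : Finset Var := R.sup Atom.vars

structure Body (Rel : Type) where
  atoms : Finset (Atom Rel)
  comps : Finset Comp

def Body.vars (B : Body Rel) : Finset Var := atomsVars B.atoms ∪ compsVars B.comps

/-- A database assigns to every relation symbol a set of tuples over `ℚ`. -/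
abbrev Database (Rel : Type) := Rel → Set (List ℚ)

def FiniteDB (D : Database Rel) : Prop := ∀ p, (D p).Finite

def Atom.satisfied (D : Database Rel) (γ : Var → ℚ) (a : Atom Rel) : Prop :=
  a.args.map (Term.eval γ) ∈ D a.rel

def Body.satisfied (D : Database Rel) (γ : Var → ℚ) (B : Body Rel) : Prop :=
  (∀ a ∈ B.atoms, a.satisfied D γ) ∧ holdsAll γ B.comps

def Body.subst (θ : Var → Term) (B : Body Rel) : Body Rel :=
  ⟨B.atoms.image (Atom.subst θ), B.comps.image (Comp.subst θ)⟩

/-! ### Aggregate queries (COUNT is the special case of an empty aggregation list;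
a SUM-query `q(x̄; SUM(y))` has aggregation list `[y]`; in general the query sums,
for each group, the product of the values of the variables in `aggVars`). -/

structure AggQuery (Rel : Type) where
  head : List Var
  aggVars : List Var
  body : Body Rel

/-- Safety: the head variables and aggregation variables occur in relational atoms. -/
def AggQuery.Safe (q : AggQuery Rel) : Prop :=
  ∀ v ∈ q.head ++ q.aggVars, v ∈ atomsVars q.body.atoms

/-- The group of the tuple `t`: all satisfying assignments with head value `t`,
normalized to be `0` outside the variables of the body. -/
def group (q : AggQuery Rel) (D : Database Rel) (t : List ℚ) : Set (Var → ℚ) :=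
  {γ | q.body.satisfied D γ ∧ (∀ v, v ∉ q.body.vars → γ v = 0) ∧ q.head.map γ = t}

noncomputable def AggQuery.result (q : AggQuery Rel) (D : Database Rel) : Set (List ℚ × ℚ) :=
  {r | ∃ γ, q.body.satisfied D γ ∧ r.1 = q.head.map γ ∧
       r.2 = ∑ᶠ γ' ∈ group q D r.1, (q.aggVars.map γ').prod}

def AggQuery.equiv (q q' : AggQuery Rel) : Prop :=
  ∀ D : Database Rel, FiniteDB D → q.result D = q'.result D

def IsCountQuery (q : AggQuery Rel) : Prop := q.aggVars = [] ∧ q.Safe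
def IsRelational (q : AggQuery Rel) : Prop := q.body.comps = ∅
def IsLinear (q : AggQuery Rel) : Prop :=
  ∀ a ∈ q.body.atoms, ∀ b ∈ q.body.atoms, a.rel = b.rel → a = b

def BodySatisfiable (B : Body Rel) : Prop :=
  ∃ (D : Database Rel) (γ : Var → ℚ), FiniteDB D ∧ B.satisfied D γ

/-- The nondistinguished variables of a view. -/
def ndv (v : AggQuery Rel) : Finset Var := v.body.vars \ v.head.toFinset

def IsCountView (v : AggQuery Rel) : Prop := v.aggVars = [] ∧ v.Safe
def IsSumView (v : AggQuery Rel) : Prop := ∃ y, v.aggVars = [y] ∧ y ∉ v.head ∧ v.Safe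

/-- The extension of the views over `D`, seen as a database over the view names:
the extension of view `i` consists of the tuples of `(V i).result D`, with
the aggregate value appended to the grouping tuple. -/
noncomputable def viewDB (V : ι → AggQuery Rel) (D : Database Rel) : Database ι :=
  fun i => (fun p : List ℚ × ℚ => p.1 ++ [p.2]) '' (V i).result D

/-- A head instantiation `θ`, extended as the identity outside the head of `v`. -/
def headInst (v : AggQuery Rel) (θ : Var → Term) : Var → Term :=
  fun x => if x ∈ v.head then θ x else Term.var x

/-! ### Rewriting candidates -/

/-- The data of a rewriting candidate: `n` view atoms, the `i`-th using view
`views i`, head instantiation `θ i` and fresh output variable `z i`, together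
with additional comparisons `C'`. -/
structure PreCand (ι : Type) where
  n : ℕ
  views : Fin n → ι
  θ : Fin n → Var → Term
  z : Fin n → Var
  C' : Finset Comp

def PreCand.atom (pc : PreCand ι) (V : ι → AggQuery Rel) (i : Fin pc.n) : Atom ι :=
  ⟨pc.views i, ((V (pc.views i)).head.map (pc.θ i)) ++ [Term.var (pc.z i)]⟩

/-- The candidate as a query over the view names; it groups by `head` and sums
the products of the variables `aggExtra ++ z₁ ⋯ zₙ`. -/
def PreCand.query (pc : PreCand ι) (V : ι → AggQuery Rel) (head aggExtra : List Var) :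
    AggQuery ι :=
  { head := head
    aggVars := aggExtra ++ List.ofFn pc.z
    body := ⟨Finset.univ.image (pc.atom V), pc.C'⟩ }

/-- The variables `z i` are fresh: pairwise distinct and not appearing elsewhere. -/
def PreCand.Fresh (pc : PreCand ι) (V : ι → AggQuery Rel) (head : List Var) : Prop :=
  Function.Injective pc.z ∧
  ∀ i : Fin pc.n, pc.z i ∉ head ∧ pc.z i ∉ compsVars pc.C' ∧
    ∀ j : Fin pc.n, pc.z i ∉ termListVars ((V (pc.views j)).head.map (pc.θ j))

/-- The substitution unfolding a view atom: head variables are instantiated by `θ`,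
nondistinguished variables are renamed by `ρ`. -/
def unfoldSubst (v : AggQuery Rel) (θ : Var → Term) (ρ : Var → Var) : Var → Term :=
  fun x => if x ∈ v.head then θ x else Term.var (ρ x)

def PreCand.forbidden (pc : PreCand ι) (V : ι → AggQuery Rel) (head : List Var) : Finset Var :=
  head.toFinset ∪ compsVars pc.C' ∪
    Finset.univ.sup (fun j : Fin pc.n => termListVars ((V (pc.views j)).head.map (pc.θ j)))

/-- `ρ` renames the nondistinguished variables of the view occurrences apart:
injectively, and avoiding all variables appearing elsewhere. -/
def PreCand.RenApart (pc : PreCand ι) (V : ι → AggQuery Rel) (head : List Var)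
    (ρ : Fin pc.n → Var → Var) : Prop :=
  (∀ (i j : Fin pc.n) (x y : Var), x ∈ ndv (V (pc.views i)) → y ∈ ndv (V (pc.views j)) →
      ρ i x = ρ j y → i = j ∧ x = y) ∧
  (∀ (i : Fin pc.n) (x : Var), x ∈ ndv (V (pc.views i)) → ρ i x ∉ pc.forbidden V head)

/-- The unfolding of a candidate: replace every view atom by the correspondingly
instantiated view body, with nondistinguished variables renamed apart by `ρ`. -/
def PreCand.unfold (pc : PreCand ι) (V : ι → AggQuery Rel) (head uAgg : List Var)
    (ρ : Fin pc.n → Var → Var) : AggQuery Rel :=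
  { head := head
    aggVars := uAgg
    body :=
      ⟨Finset.univ.biUnion (fun i =>
          ((V (pc.views i)).body.subst (unfoldSubst (V (pc.views i)) (pc.θ i) (ρ i))).atoms),
       (Finset.univ.biUnion (fun i =>
          ((V (pc.views i)).body.subst (unfoldSubst (V (pc.views i)) (pc.θ i) (ρ i))).comps))
         ∪ pc.C'⟩ }

/-- `r ≡_V q` : over every (finite) database, `r` evaluated on the view extensions
equals `q` evaluated on the database. -/
def equivModViews (V : ι → AggQuery Rel) (r : AggQuery ι) (q : AggQuery Rel) : Prop :=
  ∀ D : Database Rel, FiniteDB D → r.result (viewDB V D) = q.result D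

/-- `r` is a COUNT-rewriting candidate for `q` over the views `V`. -/
def IsCountCandidate (V : ι → AggQuery Rel) (q : AggQuery Rel) (r : AggQuery ι) : Prop :=
  ∃ pc : PreCand ι, pc.Fresh V q.head ∧ (∀ i, IsCountView (V (pc.views i))) ∧
    r = pc.query V q.head []

/-- `r` is a SUM-rewriting candidate (of form `r₁` or `r₂`) for a SUM-query with
head `q.head` and summation variable `y`, over the views `V`. -/
def IsSumCandidate (V : ι → AggQuery Rel) (q : AggQuery Rel) (y : Var) (r : AggQuery ι) :
    Prop :=
  ∃ pc : PreCand ι, pc.Fresh V q.head ∧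
    (((∀ i, IsCountView (V (pc.views i))) ∧
        (∃ i, Term.var y ∈ (V (pc.views i)).head.map (pc.θ i)) ∧
        r = pc.query V q.head [y]) ∨
      (∃ i₀ : Fin pc.n, IsSumView (V (pc.views i₀)) ∧
        (∀ j, j ≠ i₀ → IsCountView (V (pc.views j))) ∧
        r = pc.query V q.head []))

/-! ### Usability -/

/-- `R-usable(v, θ, φ)` : `φ` is an injective variable renaming, the identity on the
variables of `θū`, mapping `θR_v` isomorphically onto a subset `R'` of `R` such that
every variable occurring both in `R'` and in `R ∖ R'` occurs in `θū`. -/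
def Rusable (v : AggQuery Rel) (θ : Var → Term) (φ : Var → Var) (R : Finset (Atom Rel)) :
    Prop :=
  Function.Injective φ ∧
  (∀ x ∈ termListVars (v.head.map θ), φ x = x) ∧
  (v.body.atoms.image (fun a => (a.subst (headInst v θ)).rename φ)) ⊆ R ∧
  (∀ x, x ∈ atomsVars (v.body.atoms.image (fun a => (a.subst (headInst v θ)).rename φ)) →
    x ∈ atomsVars (R \ (v.body.atoms.image (fun a => (a.subst (headInst v θ)).rename φ))) →
    x ∈ termListVars (v.head.map θ))

/-- `C-usable(v, θ, φ)` : `C ⊨ φ(θ C_v)` and `C_v ⊨ C^{φ(θ ndv(v))}`. -/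
def Cusable (v : AggQuery Rel) (θ : Var → Term) (φ : Var → Var) (C : Finset Comp) : Prop :=
  entails C (v.body.comps.image (fun c => (c.subst (headInst v θ)).subst (fun x => Term.var (φ x)))) ∧
  entails v.body.comps (C.filter (fun c => (c.vars ∩ (ndv v).image φ).Nonempty))

/-! ### The algorithm Count_Rewriting / Compute_Rewriting -/

/-- The inner for-loop of the algorithm, processing the atoms of the chosen view body
in some order: a nondistinguished atom `a` (one containing a nondistinguished variable)
causes `f a` to be removed from `R`, fails if `f a` is not in `Not_Covered`, and is
removed from `Not_Covered`; for every atom, `f a` is removed from `Not_Covered`. -/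
inductive Loop (nd : Atom Rel → Prop) (f : Atom Rel → Atom Rel) :
    List (Atom Rel) → Finset (Atom Rel) → Finset (Atom Rel) →
    Finset (Atom Rel) → Finset (Atom Rel) → Prop
  | nil (R NC : Finset (Atom Rel)) : Loop nd f [] R NC R NC
  | consND {a : Atom Rel} {l R NC R' NC'} (h : nd a) (hin : f a ∈ NC) :
      Loop nd f l (R.erase (f a)) (NC.erase (f a)) R' NC' →
      Loop nd f (a :: l) R NC R' NC'
  | consD {a : Atom Rel} {l R NC R' NC'} (h : ¬ nd a) :
      Loop nd f l R (NC.erase (f a)) R' NC' →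
      Loop nd f (a :: l) R NC R' NC'

/-- `Exec V R C NC acc Cf` : starting from the state with current body `R ∧ C` and
set `NC` of not yet covered atoms, some execution of the while-loop of the algorithm
succeeds, choosing the view/instantiation sequence `acc` and terminating with final
comparison set `Cf`. -/
inductive Exec (V : ι → AggQuery Rel) :
    Finset (Atom Rel) → Finset Comp → Finset (Atom Rel) →
    List (ι × (Var → Term)) → Finset Comp → Prop
  | done (R : Finset (Atom Rel)) (C : Finset Comp) : Exec V R C ∅ [] C
  | step {R C NC R' NC' acc Cf} (i : ι) (θ : Var → Term) (φ : Var → Var)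
      (l : List (Atom Rel))
      (hR : Rusable (V i) θ φ R) (hC : Cusable (V i) θ φ C)
      (hnd : l.Nodup) (hset : l.toFinset = (V i).body.atoms)
      (hloop : Loop (fun a => (a.vars ∩ ndv (V i)).Nonempty)
          (fun a => (a.subst (headInst (V i) θ)).rename φ) l R NC R' NC')
      (hrest : Exec V R'
          (C.filter (fun c => c.vars ∩
            (atomsVars ((V i).body.atoms.image (fun a => (a.subst (headInst (V i) θ)).rename φ))
              \ termListVars ((V i).head.map θ)) = ∅))
          NC' acc Cf) :
      Exec V R C NC ((i, θ) :: acc) Cf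

/-- The rewriting candidate assembled from the sequence of choices of a run of the
algorithm, fresh variables `z` and the final comparison set `Cf`. -/
def PreCand.ofList (acc : List (ι × (Var → Term))) (z : Fin acc.length → Var)
    (Cf : Finset Comp) : PreCand ι :=
  ⟨acc.length, fun k => (acc.get k).1, fun k => (acc.get k).2, z, Cf⟩

/-- `r` is a possible output of algorithm Count_Rewriting on input `(q, V)`. -/
def CountReturns (V : ι → AggQuery Rel) (q : AggQuery Rel) (r : AggQuery ι) : Prop :=
  ∃ (acc : List (ι × (Var → Term))) (Cf : Finset Comp) (z : Fin acc.length → Var),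
    Exec V q.body.atoms q.body.comps q.body.atoms acc Cf ∧
    (PreCand.ofList acc z Cf).Fresh V q.head ∧
    r = (PreCand.ofList acc z Cf).query V q.head []

/-- `r` is a possible output of algorithm Sum_Rewriting on input `(q, V)`, where `y`
is the summation variable of `q`: first Compute_Rewriting is run on the COUNT-version
of `q`; if exactly one chosen view is a SUM-view, the result is returned unchanged;
if all chosen views are COUNT-views and `y` occurs among the instantiated view heads,
`y` is multiplied into the aggregation term. -/
def SumReturns (V : ι → AggQuery Rel) (q : AggQuery Rel) (y : Var) (r : AggQuery ι) : Prop :=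
  ∃ (acc : List (ι × (Var → Term))) (Cf : Finset Comp) (z : Fin acc.length → Var),
    Exec V q.body.atoms q.body.comps q.body.atoms acc Cf ∧
    (PreCand.ofList acc z Cf).Fresh V q.head ∧
    ((∃ i₀, IsSumView (V ((PreCand.ofList acc z Cf).views i₀)) ∧
        (∀ j, j ≠ i₀ → IsCountView (V ((PreCand.ofList acc z Cf).views j))) ∧
        r = (PreCand.ofList acc z Cf).query V q.head []) ∨
      ((∀ i, IsCountView (V ((PreCand.ofList acc z Cf).views i))) ∧
        (∃ i, Term.var y ∈ (V ((PreCand.ofList acc z Cf).views i)).head.map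
          ((PreCand.ofList acc z Cf).θ i)) ∧
        r = (PreCand.ofList acc z Cf).query V q.head [y]))


section IsoProof

set_option linter.unusedSectionVars false

open Finset

variable {Rel : Type} [DecidableEq Rel]

lemma mem_termListVars {l : List Term} {v : Var} :
    v ∈ termListVars l ↔ ∃ t ∈ l, v ∈ t.vars := by
  induction l with
  | nil => simp [termListVars]
  | cons t l ih =>
    simp only [termListVars, List.foldr] at ih ⊢
    simp [Finset.mem_union, ih]

lemma var_mem_of_mem_vars {t : Term} {v : Var} (h : v ∈ t.vars) : t = Term.var v := by
  cases t with
  | var w => simp [Term.vars] at h; subst h; rfl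
  | const c => simp [Term.vars] at h

lemma mem_atomsVars {R : Finset (Atom Rel)} {v : Var} :
    v ∈ atomsVars R ↔ ∃ a ∈ R, v ∈ a.vars := by
  simp [atomsVars, Finset.mem_sup]

lemma exists_atom_arg {R : Finset (Atom Rel)} {v : Var} (h : v ∈ atomsVars R) :
    ∃ a ∈ R, Term.var v ∈ a.args := by
  obtain ⟨a, ha, hv⟩ := mem_atomsVars.1 h
  obtain ⟨t, ht, hvt⟩ := mem_termListVars.1 hv
  exact ⟨a, ha, (var_mem_of_mem_vars hvt) ▸ ht⟩

lemma vars_subset_of_mem {R : Finset (Atom Rel)} {a : Atom Rel} (ha : a ∈ R) :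
    a.vars ⊆ atomsVars R := fun x hx => mem_atomsVars.2 ⟨a, ha, hx⟩

lemma bodyVars_of_relational {q : AggQuery Rel} (hrel : IsRelational q) :
    q.body.vars = atomsVars q.body.atoms := by
  unfold Body.vars compsVars
  rw [hrel]
  simp

lemma head_vars_mem {q : AggQuery Rel} (hq : IsCountQuery q) {v : Var}
    (hv : v ∈ q.head) : v ∈ atomsVars q.body.atoms := by
  exact hq.2 v (by simp [hq.1, hv])

lemma eval_eq_of_eqOn {γ γ' : Var → ℚ} {t : Term} {S : Finset Var}
    (hS : t.vars ⊆ S) (h : ∀ v ∈ S, γ v = γ' v) : t.eval γ = t.eval γ' := by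
  cases t with
  | var v => exact h v (hS (by simp [Term.vars]))
  | const c => rfl

lemma atom_satisfied_of_eqOn {D : Database Rel} {γ γ' : Var → ℚ} {a : Atom Rel}
    (h : ∀ v ∈ a.vars, γ v = γ' v) (hs : a.satisfied D γ) : a.satisfied D γ' := by
  unfold Atom.satisfied at hs ⊢
  have : a.args.map (Term.eval γ') = a.args.map (Term.eval γ) := by
    apply List.map_congr_left
    intro t ht
    exact (eval_eq_of_eqOn (S := a.vars) (fun v hv => mem_termListVars.2 ⟨t, ht, hv⟩)
      (fun v hv => (h v hv).symm) : t.eval γ' = t.eval γ)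
  rwa [this]

/-- Normalisation of a satisfying assignment into the group. -/
lemma normalize_mem_group {q : AggQuery Rel} (hq : IsCountQuery q) (hrel : IsRelational q)
    {D : Database Rel} {γ : Var → ℚ} {t : List ℚ}
    (hsat : q.body.satisfied D γ) (ht : q.head.map γ = t) :
    (fun v => if v ∈ q.body.vars then γ v else 0) ∈ group q D t := by
  set γ' := fun v => if v ∈ q.body.vars then γ v else 0 with hγ'
  have hag : ∀ v ∈ atomsVars q.body.atoms, γ v = γ' v := by
    intro v hv
    simp [hγ', bodyVars_of_relational hrel, hv]
  refine ⟨⟨fun a ha => ?_, ?_⟩, fun v hv => ?_, ?_⟩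
  · exact atom_satisfied_of_eqOn (fun v hv => hag v (vars_subset_of_mem ha hv)) (hsat.1 a ha)
  · rw [hrel]; intro c hc; simp at hc
  · simp [hγ', hv]
  · rw [← ht]
    apply List.map_congr_left
    intro v hv
    exact (hag v (head_vars_mem hq hv)).symm

/-- The group of a COUNT query over a finite database is finite. -/
lemma group_finite {q : AggQuery Rel} (hrel : IsRelational q)
    {D : Database Rel} (hD : FiniteDB D) (t : List ℚ) : (group q D t).Finite := by
  classical
  set S := q.body.vars with hS
  set Vals : Set ℚ := {x | ∃ a ∈ q.body.atoms, ∃ l ∈ D a.rel, x ∈ l} with hVals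
  have hValsFin : Vals.Finite := by
    have : Vals = ⋃ a ∈ (q.body.atoms : Finset (Atom Rel)), ⋃ l ∈ D a.rel, {x | x ∈ l} := by
      ext x; simp [hVals]
    rw [this]
    exact (q.body.atoms : Finset (Atom Rel)).finite_toSet.biUnion
      (fun a _ => (hD a.rel).biUnion (fun l _ => l.finite_toSet))
  have hval : ∀ γ ∈ group q D t, ∀ v ∈ S, γ v ∈ Vals := by
    intro γ hγ v hv
    rw [hS, bodyVars_of_relational hrel] at hv
    obtain ⟨a, ha, hva⟩ := exists_atom_arg hv
    refine ⟨a, ha, a.args.map (Term.eval γ), hγ.1.1 a ha, ?_⟩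
    have := List.mem_map_of_mem (f := Term.eval γ) hva
    exact this
  have hinj : Set.InjOn (fun (γ : Var → ℚ) (v : S) => γ v.1) (group q D t) := by
    intro γ1 h1 γ2 h2 h
    funext v
    by_cases hv : v ∈ S
    · exact congrFun h ⟨v, hv⟩
    · rw [h1.2.1 v hv, h2.2.1 v hv]
  apply Set.Finite.of_finite_image _ hinj
  apply Set.Finite.subset (Set.Finite.pi (fun _ : S => hValsFin))
  rintro f ⟨γ, hγ, rfl⟩
  intro v _
  exact hval γ hγ v.1 v.2

lemma eval_rename {γ : Var → ℚ} {f : Var → Var} (t : Term) :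
    (t.rename f).eval γ = t.eval (γ ∘ f) := by
  cases t <;> rfl

lemma termListVars_map_rename (f : Var → Var) (l : List Term) :
    termListVars (l.map (Term.rename f)) = (termListVars l).image f := by
  induction l with
  | nil => simp [termListVars]
  | cons t l ih =>
    simp only [List.map_cons, termListVars, List.foldr] at ih ⊢
    rw [ih, Finset.image_union]
    congr 1
    cases t <;> simp [Term.rename, Term.vars]

lemma atom_vars_rename (f : Var → Var) (a : Atom Rel) :
    (a.rename f).vars = a.vars.image f := by
  unfold Atom.rename Atom.vars
  exact termListVars_map_rename f a.args

lemma atomsVars_image_rename (f : Var → Var) (R : Finset (Atom Rel)) :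
    atomsVars (R.image (Atom.rename f)) = (atomsVars R).image f := by
  ext v
  simp only [mem_atomsVars, Finset.mem_image]
  constructor
  · rintro ⟨a, ⟨b, hb, rfl⟩, hv⟩
    rw [atom_vars_rename] at hv
    obtain ⟨w, hw, rfl⟩ := Finset.mem_image.1 hv
    exact ⟨w, ⟨b, hb, hw⟩, rfl⟩
  · rintro ⟨w, hw, rfl⟩
    obtain ⟨b, hb, hwb⟩ := hw
    exact ⟨b.rename f, ⟨b, hb, rfl⟩, (atom_vars_rename f b) ▸ Finset.mem_image_of_mem f hwb⟩

lemma term_rename_rename (f g : Var → Var) (t : Term) :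
    (t.rename g).rename f = t.rename (f ∘ g) := by cases t <;> rfl

lemma atom_rename_rename (f g : Var → Var) (a : Atom Rel) :
    (a.rename g).rename f = a.rename (f ∘ g) := by
  unfold Atom.rename
  simp [List.map_map, Function.comp_def, term_rename_rename]

lemma atom_rename_id (a : Atom Rel) : a.rename id = a := by
  unfold Atom.rename
  have : ∀ t : Term, t.rename id = t := by intro t; cases t <;> rfl
  rw [show Term.rename id = id from funext this, List.map_id]

lemma mem_group_comp {q q' : AggQuery Rel} (hrel : IsRelational q) (hrel' : IsRelational q') (e : Var ≃ Var)
    (hhead : q.head.map (fun x => e x) = q'.head)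
    (hatoms : q.body.atoms.image (Atom.rename (fun x => e x)) = q'.body.atoms)
    {D : Database Rel} {t : List ℚ} {γ : Var → ℚ} (hγ : γ ∈ group q D t) :
    γ ∘ ⇑e.symm ∈ group q' D t := by
  have hcomp : (γ ∘ ⇑e.symm) ∘ (fun x => e x) = γ := by
    funext x; simp
  refine ⟨⟨fun a' ha' => ?_, ?_⟩, fun v hv => ?_, ?_⟩
  · rw [← hatoms] at ha'
    obtain ⟨a, ha, rfl⟩ := Finset.mem_image.1 ha'
    unfold Atom.satisfied Atom.rename
    simp only [List.map_map]
    have : (Term.eval (γ ∘ ⇑e.symm) ∘ Term.rename fun x => e x) = Term.eval γ := by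
      funext s
      simp only [Function.comp_apply, eval_rename, hcomp]
    rw [this]
    exact hγ.1.1 a ha
  · rw [hrel']; intro c hc; exact absurd hc (Finset.notMem_empty c)
  · have h1 : q'.body.vars = (q.body.vars).image (fun x => e x) := by
      rw [bodyVars_of_relational hrel', bodyVars_of_relational hrel, ← hatoms,
        atomsVars_image_rename]
    apply hγ.2.1
    intro hmem
    exact hv (h1 ▸ Finset.mem_image.2 ⟨_, hmem, by simp⟩)
  · rw [← hhead, List.map_map, hcomp]
    exact hγ.2.2

noncomputable def cnt (q : AggQuery Rel) (D : Database Rel) (t : List ℚ) : ℕ :=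
  (group q D t).ncard

lemma finsum_count {q : AggQuery Rel} (hq : IsCountQuery q)
    {D : Database Rel} {t : List ℚ} (hfin : (group q D t).Finite) :
    ∑ᶠ γ' ∈ group q D t, (List.map γ' q.aggVars).prod = (cnt q D t : ℚ) := by
  rw [hq.1]
  rw [show group q D t = ↑hfin.toFinset by simp, finsum_mem_coe_finset]
  simp only [List.map_nil, List.prod_nil]
  rw [Finset.sum_const, nsmul_eq_mul, mul_one, cnt, Set.ncard_eq_toFinset_card _ hfin]

lemma mem_result_iff {q : AggQuery Rel} (hq : IsCountQuery q) (hrel : IsRelational q)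
    {D : Database Rel} (hD : FiniteDB D) {t : List ℚ} {c : ℚ} :
    (t, c) ∈ q.result D ↔ (group q D t).Nonempty ∧ c = (cnt q D t : ℚ) := by
  constructor
  · rintro ⟨γ, hsat, h1, h2⟩
    simp only at h1 h2
    have hmem := normalize_mem_group hq hrel hsat h1.symm
    refine ⟨⟨_, hmem⟩, ?_⟩
    rw [h2]
    exact finsum_count hq (group_finite hrel hD t)
  · rintro ⟨⟨γ, hγ⟩, rfl⟩
    exact ⟨γ, hγ.1, hγ.2.2.symm, by
      simp only
      exact (finsum_count hq (group_finite hrel hD t)).symm⟩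

lemma cnt_eq_of_equiv {q q' : AggQuery Rel} (hq : IsCountQuery q) (hq' : IsCountQuery q')
    (hrel : IsRelational q) (hrel' : IsRelational q') (heq : q.equiv q')
    {D : Database Rel} (hD : FiniteDB D) (t : List ℚ) : cnt q D t = cnt q' D t := by
  by_cases h : (group q D t).Nonempty
  · have h1 : (t, (cnt q D t : ℚ)) ∈ q.result D := (mem_result_iff hq hrel hD).2 ⟨h, rfl⟩
    rw [heq D hD] at h1
    have h2 := (mem_result_iff hq' hrel' hD).1 h1
    exact_mod_cast h2.2
  · by_cases h' : (group q' D t).Nonempty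
    · have h1 : (t, (cnt q' D t : ℚ)) ∈ q'.result D := (mem_result_iff hq' hrel' hD).2 ⟨h', rfl⟩
      rw [← heq D hD] at h1
      exact absurd ((mem_result_iff hq hrel hD).1 h1).1 h
    · rw [Set.not_nonempty_iff_eq_empty] at h h'
      simp [cnt, h, h']

/-! ### Hard direction: blow-up databases over the frozen canonical database -/

def termListConsts (l : List Term) : Finset ℚ := l.foldr (fun t s => t.consts ∪ s) ∅

lemma mem_termListConsts {l : List Term} {c : ℚ} :
    c ∈ termListConsts l ↔ ∃ t ∈ l, c ∈ t.consts := by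
  induction l with
  | nil => simp [termListConsts]
  | cons t l ih =>
    simp only [termListConsts, List.foldr] at ih ⊢
    simp [Finset.mem_union, ih]

def atomsConsts (R : Finset (Atom Rel)) : Finset ℚ := R.sup (fun a => termListConsts a.args)

lemma const_mem_atomsConsts {R : Finset (Atom Rel)} {a : Atom Rel} {c : ℚ}
    (ha : a ∈ R) (h : Term.const c ∈ a.args) : c ∈ atomsConsts R :=
  Finset.mem_sup.2 ⟨a, ha, mem_termListConsts.2 ⟨Term.const c, h, by simp [Term.consts]⟩⟩

def BlowT (κ : Var × ℕ → ℚ) (Nw : Var → ℕ) : Term → ℚ → Prop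
  | .var w => fun x => ∃ i, i < Nw w ∧ x = κ (w, i)
  | .const c => fun x => x = c

def blowDB (qA : AggQuery Rel) (κ : Var × ℕ → ℚ) (Nw : Var → ℕ) : Database Rel :=
  fun p => {l | ∃ a ∈ qA.body.atoms, a.rel = p ∧ List.Forall₂ (BlowT κ Nw) a.args l}

lemma blowT_mono {κ : Var × ℕ → ℚ} {Nw : Var → ℕ} (hN : ∀ w, 1 ≤ Nw w) {s : Term} {x : ℚ}
    (h : BlowT κ (fun _ => 1) s x) : BlowT κ Nw s x := by
  cases s with
  | var w =>
    obtain ⟨i, hi, rfl⟩ := h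
    exact ⟨i, lt_of_lt_of_le hi (hN w), rfl⟩
  | const c => exact h

lemma forall₂_imp_mem {α β : Type*} {R S : α → β → Prop} :
    ∀ {l₁ : List α} {l₂ : List β}, List.Forall₂ R l₁ l₂ →
      (∀ s ∈ l₁, ∀ x ∈ l₂, R s x → S s x) → List.Forall₂ S l₁ l₂
  | _, _, List.Forall₂.nil, _ => .nil
  | _, _, List.Forall₂.cons h t, H =>
    .cons (H _ (by simp) _ (by simp) h)
      (forall₂_imp_mem t (fun s hs x hx hr => H s (by simp [hs]) x (by simp [hx]) hr))

lemma forall₂_exists_left {α β : Type*} {R : α → β → Prop} :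
    ∀ {l₁ : List α} {l₂ : List β}, List.Forall₂ R l₁ l₂ → ∀ x ∈ l₂, ∃ y ∈ l₁, R y x
  | _, _, List.Forall₂.nil, x, hx => absurd hx (by simp)
  | _, _, List.Forall₂.cons h t, x, hx => by
    rcases List.mem_cons.1 hx with rfl | hx'
    · exact ⟨_, by simp, h⟩
    · obtain ⟨y, hy, hr⟩ := forall₂_exists_left t x hx'
      exact ⟨y, by simp [hy], hr⟩

lemma forall₂_set_finite {R : Term → ℚ → Prop} (h : ∀ t : Term, {x | R t x}.Finite)
    (ts : List Term) : {l : List ℚ | List.Forall₂ R ts l}.Finite := by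
  induction ts with
  | nil =>
    apply Set.Finite.subset (Set.finite_singleton ([] : List ℚ))
    intro l hl
    cases hl
    rfl
  | cons t ts ih =>
    apply Set.Finite.subset (Set.Finite.image (fun p : ℚ × List ℚ => p.1 :: p.2) ((h t).prod ih))
    rintro l hl
    cases hl with
    | cons hx hl' => exact ⟨(_, _), ⟨hx, hl'⟩, rfl⟩

lemma blowT_finite (κ : Var × ℕ → ℚ) (Nw : Var → ℕ) (t : Term) :
    {x | BlowT κ Nw t x}.Finite := by
  cases t with
  | var w =>
    apply Set.Finite.subset (Set.Finite.image (fun i => κ (w, i)) (Set.finite_Iio (Nw w)))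
    rintro x ⟨i, hi, rfl⟩
    exact ⟨i, hi, rfl⟩
  | const c => exact Set.Finite.subset (Set.finite_singleton c) (fun x hx => hx)

lemma blowDB_finite (qA : AggQuery Rel) (κ : Var × ℕ → ℚ) (Nw : Var → ℕ) :
    FiniteDB (blowDB qA κ Nw) := by
  intro p
  apply Set.Finite.subset
    (Set.Finite.biUnion (qA.body.atoms : Finset (Atom Rel)).finite_toSet
      (fun a _ => forall₂_set_finite (blowT_finite κ Nw) a.args))
  rintro l ⟨a, ha, _, hF⟩
  exact Set.mem_biUnion ha hF

/-- The canonical head tuple of the frozen database of `qA`. -/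
def frzHead (qA : AggQuery Rel) (κ : Var × ℕ → ℚ) : List ℚ := qA.head.map (fun v => κ (v, 0))

/-- Values taken by a group member over a blow-up database. -/
lemma group_values {qA qB : AggQuery Rel} {K : Finset ℚ}
    (hKA : atomsConsts qA.body.atoms ⊆ K) {κ : Var × ℕ → ℚ} {Nw : Var → ℕ}
    {t : List ℚ} {γ : Var → ℚ} (hγ : γ ∈ group qB (blowDB qA κ Nw) t)
    {v : Var} (hv : v ∈ atomsVars qB.body.atoms) :
    γ v ∈ K ∨ ∃ w ∈ atomsVars qA.body.atoms, ∃ i, i < Nw w ∧ γ v = κ (w, i) := by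
  obtain ⟨b, hb, hvb⟩ := exists_atom_arg hv
  obtain ⟨a, ha, hrel, hF⟩ := hγ.1.1 b hb
  rw [List.forall₂_map_right_iff] at hF
  obtain ⟨s, hs, hR⟩ := forall₂_exists_left hF _ hvb
  cases hsv : s with
  | var w =>
    rw [hsv] at hR
    obtain ⟨i, hi, hx⟩ := hR
    refine Or.inr ⟨w, ?_, i, hi, hx⟩
    exact mem_atomsVars.2 ⟨a, ha, mem_termListVars.2 ⟨s, hs, by simp [hsv, Term.vars]⟩⟩
  | const c =>
    rw [hsv] at hR
    have : γ v = c := hR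
    exact Or.inl (this ▸ hKA (const_mem_atomsConsts ha (hsv ▸ hs)))

open Classical in
noncomputable def baseκ (κ : Var × ℕ → ℚ) : ℚ → ℚ :=
  fun x => if h : ∃ p, κ p = x then κ ((Classical.choose h).1, 0) else x

lemma baseκ_apply {κ : Var × ℕ → ℚ} (hκinj : Function.Injective κ) (w : Var) (i : ℕ) :
    baseκ κ (κ (w, i)) = κ (w, 0) := by
  unfold baseκ
  rw [dif_pos (⟨(w, i), rfl⟩ : ∃ p, κ p = κ (w, i))]
  have h := Classical.choose_spec (⟨(w, i), rfl⟩ : ∃ p, κ p = κ (w, i))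
  rw [hκinj h]

lemma baseκ_of_not_range {κ : Var × ℕ → ℚ} {x : ℚ} (hx : ∀ p, κ p ≠ x) :
    baseκ κ x = x := by
  unfold baseκ
  rw [dif_neg]
  rintro ⟨p, hp⟩
  exact hx p hp


lemma blowT_base {K : Finset ℚ} {κ : Var × ℕ → ℚ} (hκinj : Function.Injective κ)
    (hκK : ∀ p, κ p ∉ K) {Nw : Var → ℕ} {s : Term} {x : ℚ}
    (hsK : ∀ c, s = Term.const c → c ∈ K) (h : BlowT κ Nw s x) :
    BlowT κ (fun _ => 1) s (baseκ κ x) := by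
  cases s with
  | var w =>
    obtain ⟨i, _, rfl⟩ := h
    exact ⟨0, Nat.zero_lt_one, baseκ_apply hκinj w i⟩
  | const c =>
    have hx : x = c := h
    have hc : c ∈ K := hsK c rfl
    show baseκ κ x = c
    rw [hx, baseκ_of_not_range (fun p hp => hκK p (by rw [hp]; exact hc))]

lemma base_mem_group {qA qB : AggQuery Rel} (hrelB : IsRelational qB)
    {K : Finset ℚ} (hKA : atomsConsts qA.body.atoms ⊆ K)
    (hKB : atomsConsts qB.body.atoms ⊆ K)
    {κ : Var × ℕ → ℚ} (hκinj : Function.Injective κ) (hκK : ∀ p, κ p ∉ K)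
    (hκ0 : ∀ p, κ p ≠ 0) {Nw : Var → ℕ}
    {γ : Var → ℚ} (hγ : γ ∈ group qB (blowDB qA κ Nw) (frzHead qA κ)) :
    (baseκ κ ∘ γ) ∈ group qB (blowDB qA κ (fun _ => 1)) (frzHead qA κ) := by
  refine ⟨⟨fun b hb => ?_, ?_⟩, fun v hv => ?_, ?_⟩
  · obtain ⟨a, ha, hrel, hF⟩ := hγ.1.1 b hb
    refine ⟨a, ha, hrel, ?_⟩
    rw [List.forall₂_map_right_iff] at hF ⊢
    refine forall₂_imp_mem hF (fun s hs t ht hR => ?_)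
    have hbase : Term.eval (baseκ κ ∘ γ) t = baseκ κ (Term.eval γ t) := by
      cases t with
      | var v => rfl
      | const c =>
        have hcK : c ∈ K := hKB (const_mem_atomsConsts hb ht)
        exact (baseκ_of_not_range (fun p hp => hκK p (by rw [hp]; exact hcK))).symm
    rw [hbase]
    exact blowT_base hκinj hκK
      (fun c hc => hKA (const_mem_atomsConsts ha (hc ▸ hs))) hR
  · rw [hrelB]
    intro c hc
    exact absurd hc (Finset.notMem_empty c)
  · have h0 : γ v = 0 := hγ.2.1 v hv
    show baseκ κ (γ v) = 0
    rw [h0, baseκ_of_not_range (fun p hp => hκ0 p hp)]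
  · have hh := hγ.2.2
    have : qB.head.map (baseκ κ ∘ γ) = (qB.head.map γ).map (baseκ κ) := by
      rw [List.map_map]
    rw [this, hh]
    unfold frzHead
    rw [List.map_map]
    apply List.map_congr_left
    intro u hu
    exact baseκ_apply hκinj u 0

/-- The base variable of a frozen value. -/
noncomputable def wOf (κ : Var × ℕ → ℚ) (γ₀ : Var → ℚ) (v : Var) : Var :=
  (Function.invFun κ (γ₀ v)).1

/-- The free (non-head, non-constant) variables of a frozen assignment. -/
def Tset (qB : AggQuery Rel) (K : Finset ℚ) (γ₀ : Var → ℚ) : Finset Var :=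
  (atomsVars qB.body.atoms \ qB.head.toFinset).filter (fun v => γ₀ v ∉ K)

lemma Tset_subset_SB {qB : AggQuery Rel} {K : Finset ℚ} {γ₀ : Var → ℚ} :
    Tset qB K γ₀ ⊆ atomsVars qB.body.atoms := by
  intro v hv
  exact (Finset.mem_sdiff.1 (Finset.mem_filter.1 hv).1).1

lemma head_not_mem_Tset {qB : AggQuery Rel} {K : Finset ℚ} {γ₀ : Var → ℚ} {v : Var}
    (hv : v ∈ qB.head) : v ∉ Tset qB K γ₀ := by
  intro h
  exact (Finset.mem_sdiff.1 (Finset.mem_filter.1 h).1).2 (List.mem_toFinset.2 hv)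

section FiberSetup

variable {qA qB : AggQuery Rel} (hqB : IsCountQuery qB) (hrelB : IsRelational qB)
  {K : Finset ℚ} (hKA : atomsConsts qA.body.atoms ⊆ K)
  (hKB : atomsConsts qB.body.atoms ⊆ K)
  {κ : Var × ℕ → ℚ} (hκinj : Function.Injective κ) (hκK : ∀ p, κ p ∉ K)
  (hκ0 : ∀ p, κ p ≠ 0) {Nw : Var → ℕ} (hN : ∀ w, 1 ≤ Nw w)

include hKA hκinj in
/-- frozen values of free variables. -/
lemma frozen_value {γ₀ : Var → ℚ} (hγ₀ : γ₀ ∈ group qB (blowDB qA κ (fun _ => 1)) (frzHead qA κ))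
    {v : Var} (hv : v ∈ Tset qB K γ₀) :
    γ₀ v = κ (wOf κ γ₀ v, 0) ∧ wOf κ γ₀ v ∈ atomsVars qA.body.atoms := by
  have hK : γ₀ v ∉ K := (Finset.mem_filter.1 hv).2
  rcases group_values hKA hγ₀ (Tset_subset_SB hv) with h | ⟨w, hw, i, hi, hx⟩
  · exact absurd h hK
  · interval_cases i
    have : wOf κ γ₀ v = w := by
      rw [wOf, hx, Function.leftInverse_invFun hκinj (w, 0)]
    rw [this]
    exact ⟨hx, hw⟩

include hrelB hKA hκinj hκK hκ0 in
lemma base_fix_group {γ₀ : Var → ℚ}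
    (hγ₀ : γ₀ ∈ group qB (blowDB qA κ (fun _ => 1)) (frzHead qA κ)) (x : Var) :
    baseκ κ (γ₀ x) = γ₀ x := by
  by_cases hx : x ∈ atomsVars qB.body.atoms
  · rcases group_values hKA hγ₀ hx with h | ⟨w, _, i, hi, hv⟩
    · exact baseκ_of_not_range (fun p hp => hκK p (by rw [hp]; exact h))
    · interval_cases i
      rw [hv, baseκ_apply hκinj]
  · have h0 : γ₀ x = 0 := hγ₀.2.1 x (by rwa [bodyVars_of_relational hrelB])
    rw [h0]
    exact baseκ_of_not_range (fun p hp => hκ0 p hp)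

include hKA hκinj hκK in
/-- Analysis of a fiber member on free variables. -/
lemma fiber_free {γ γ₀ : Var → ℚ}
    (hγ : γ ∈ group qB (blowDB qA κ Nw) (frzHead qA κ)) (hb : baseκ κ ∘ γ = γ₀)
    {v : Var} (hv : v ∈ Tset qB K γ₀) :
    γ v = κ (wOf κ γ₀ v, (Function.invFun κ (γ v)).2) ∧
      (Function.invFun κ (γ v)).2 < Nw (wOf κ γ₀ v) := by
  have hK : γ₀ v ∉ K := (Finset.mem_filter.1 hv).2
  rcases group_values hKA hγ (Tset_subset_SB hv) with h | ⟨w, hw, i, hi, hx⟩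
  · exfalso
    apply hK
    have : γ₀ v = γ v := by
      rw [← hb]
      exact (baseκ_of_not_range (fun p hp => hκK p (by rw [hp]; exact h)))
    rwa [this]
  · have hb0 : γ₀ v = κ (w, 0) := by
      rw [← hb]
      show baseκ κ (γ v) = _
      rw [hx, baseκ_apply hκinj]
    have hwOf : wOf κ γ₀ v = w := by
      rw [wOf, hb0, Function.leftInverse_invFun hκinj (w, 0)]
    have hinv : Function.invFun κ (γ v) = (w, i) := by
      rw [hx, Function.leftInverse_invFun hκinj (w, i)]
    rw [hwOf, hinv]
    exact ⟨hx, hi⟩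

include hrelB hKA hκinj hκK in
/-- A fiber member agrees with the frozen assignment off the free variables. -/
lemma fiber_fixed {γ γ₀ : Var → ℚ}
    (hγ : γ ∈ group qB (blowDB qA κ Nw) (frzHead qA κ))
    (hγ₀ : γ₀ ∈ group qB (blowDB qA κ (fun _ => 1)) (frzHead qA κ))
    (hb : baseκ κ ∘ γ = γ₀) {v : Var} (hv : v ∉ Tset qB K γ₀) : γ v = γ₀ v := by
  by_cases hSB : v ∈ atomsVars qB.body.atoms
  · by_cases hH : v ∈ qB.head
    · have h1 := hγ.2.2
      have h2 := hγ₀.2.2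
      rw [← h2, List.map_eq_map_iff] at h1
      exact h1 v hH
    · have hKv : γ₀ v ∈ K := by
        by_contra hKv
        exact hv (Finset.mem_filter.2 ⟨Finset.mem_sdiff.2 ⟨hSB, fun h =>
          hH (List.mem_toFinset.1 h)⟩, hKv⟩)
      rcases group_values hKA hγ hSB with h | ⟨w, _, i, hi, hx⟩
      · rw [← hb]
        exact (baseκ_of_not_range (fun p hp => hκK p (by rw [hp]; exact h))).symm
      · exfalso
        apply hκK (w, 0)
        have : γ₀ v = κ (w, 0) := by
          rw [← hb]
          show baseκ κ (γ v) = _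
          rw [hx, baseκ_apply hκinj]
        rwa [← this]
  · have h1 : γ v = 0 := hγ.2.1 v (by rwa [bodyVars_of_relational hrelB])
    have h2 : γ₀ v = 0 := hγ₀.2.1 v (by rwa [bodyVars_of_relational hrelB])
    rw [h1, h2]

include hrelB hKA hκinj hN in
/-- Membership of the modified assignment in the blow-up group. -/
lemma lift_mem_group {γ₀ : Var → ℚ}
    (hγ₀ : γ₀ ∈ group qB (blowDB qA κ (fun _ => 1)) (frzHead qA κ))
    (c : ∀ v : ↥(Tset qB K γ₀), Fin (Nw (wOf κ γ₀ v.1))) :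
    (fun x => if hx : x ∈ Tset qB K γ₀ then κ (wOf κ γ₀ x, (c ⟨x, hx⟩ : ℕ)) else γ₀ x)
      ∈ group qB (blowDB qA κ Nw) (frzHead qA κ) := by
  set γ' := fun x => if hx : x ∈ Tset qB K γ₀ then κ (wOf κ γ₀ x, (c ⟨x, hx⟩ : ℕ)) else γ₀ x
    with hγ'def
  refine ⟨⟨fun b hb => ?_, ?_⟩, fun v hv => ?_, ?_⟩
  · obtain ⟨a, ha, hrel, hF⟩ := hγ₀.1.1 b hb
    refine ⟨a, ha, hrel, ?_⟩
    rw [List.forall₂_map_right_iff] at hF ⊢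
    refine forall₂_imp_mem hF (fun s hs t ht hR => ?_)
    cases t with
    | const cc => exact blowT_mono hN hR
    | var v =>
      by_cases hv : v ∈ Tset qB K γ₀
      · have hfr := frozen_value hKA hκinj hγ₀ hv
        have hγ'v : Term.eval γ' (Term.var v) = κ (wOf κ γ₀ v, (c ⟨v, hv⟩ : ℕ)) := by
          show γ' v = _
          rw [hγ'def]
          simp only [dif_pos hv]
        cases s with
        | const c' =>
          exfalso
          have : γ₀ v = c' := hR
          exact (Finset.mem_filter.1 hv).2 (this ▸ hKA (const_mem_atomsConsts ha hs))
        | var w' =>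
          obtain ⟨i, hi, hx⟩ := hR
          interval_cases i
          have hww : w' = wOf κ γ₀ v := by
            have h1 : γ₀ v = κ (wOf κ γ₀ v, 0) := hfr.1
            have hx' : κ (w', 0) = κ (wOf κ γ₀ v, 0) := by
              rw [← h1]
              exact hx.symm
            exact congrArg Prod.fst (hκinj hx')
          rw [hγ'v, hww]
          exact ⟨(c ⟨v, hv⟩ : ℕ), (c ⟨v, hv⟩).2, rfl⟩
      · have hγ'v : Term.eval γ' (Term.var v) = γ₀ v := by
          show γ' v = _
          rw [hγ'def]
          simp only [dif_neg hv]
        rw [show Term.eval γ' (Term.var v) = γ₀ v from hγ'v]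
        exact blowT_mono hN hR
  · rw [hrelB]
    intro cc hcc
    exact absurd hcc (Finset.notMem_empty cc)
  · have hSB : v ∉ atomsVars qB.body.atoms := by rwa [bodyVars_of_relational hrelB] at hv
    have hvT : v ∉ Tset qB K γ₀ := fun h => hSB (Tset_subset_SB h)
    show γ' v = 0
    rw [hγ'def]
    simp only [dif_neg hvT]
    exact hγ₀.2.1 v (by rwa [bodyVars_of_relational hrelB])
  · have : qB.head.map γ' = qB.head.map γ₀ := by
      apply List.map_congr_left
      intro v hv
      show γ' v = γ₀ v
      rw [hγ'def]
      simp only [dif_neg (head_not_mem_Tset hv)]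
    rw [this]
    exact hγ₀.2.2

include hrelB hKA hKB hκinj hκK hκ0 hN in
lemma fiber_ncard {γ₀ : Var → ℚ}
    (hγ₀ : γ₀ ∈ group qB (blowDB qA κ (fun _ => 1)) (frzHead qA κ)) :
    {γ | γ ∈ group qB (blowDB qA κ Nw) (frzHead qA κ) ∧ baseκ κ ∘ γ = γ₀}.ncard
      = ∏ v ∈ Tset qB K γ₀, Nw (wOf κ γ₀ v) := by
  classical
  rw [← Nat.card_coe_set_eq]
  have e : {γ | γ ∈ group qB (blowDB qA κ Nw) (frzHead qA κ) ∧ baseκ κ ∘ γ = γ₀} ≃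
      (∀ v : ↥(Tset qB K γ₀), Fin (Nw (wOf κ γ₀ v.1))) := by
    refine
      { toFun := fun γp v => ⟨(Function.invFun κ (γp.1 v.1)).2,
          (fiber_free hKA hκinj hκK γp.2.1 γp.2.2 v.2).2⟩
        invFun := fun c => ⟨fun x => if hx : x ∈ Tset qB K γ₀
            then κ (wOf κ γ₀ x, (c ⟨x, hx⟩ : ℕ)) else γ₀ x,
          lift_mem_group hrelB hKA hκinj hN hγ₀ c, ?_⟩
        left_inv := ?_
        right_inv := ?_ }
    · funext x
      simp only [Function.comp_apply]
      by_cases hx : x ∈ Tset qB K γ₀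
      · rw [dif_pos hx, baseκ_apply hκinj]
        exact (frozen_value hKA hκinj hγ₀ hx).1.symm
      · rw [dif_neg hx]
        exact base_fix_group hrelB hKA hκinj hκK hκ0 hγ₀ x
    · intro γp
      apply Subtype.ext
      funext x
      by_cases hx : x ∈ Tset qB K γ₀
      · simp only [dif_pos hx]
        exact (fiber_free hKA hκinj hκK γp.2.1 γp.2.2 hx).1.symm
      · simp only [dif_neg hx]
        exact (fiber_fixed hrelB hKA hκinj hκK γp.2.1 hγ₀ γp.2.2 hx).symm
    · intro c
      funext v
      apply Fin.ext
      show (Function.invFun κ (if hx : v.1 ∈ Tset qB K γ₀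
          then κ (wOf κ γ₀ v.1, (c ⟨v.1, hx⟩ : ℕ)) else γ₀ v.1)).2 = (c v : ℕ)
      rw [dif_pos v.2, Function.leftInverse_invFun hκinj]
  rw [Nat.card_congr e, Nat.card_pi]
  simp only [Nat.card_eq_fintype_card, Fintype.card_fin]
  exact Finset.prod_coe_sort (Tset qB K γ₀) (fun v => Nw (wOf κ γ₀ v))

include hrelB hKA hKB hκinj hκK hκ0 hN in
lemma blow_count :
    cnt qB (blowDB qA κ Nw) (frzHead qA κ) =
      ∑ γ₀ ∈ (group_finite hrelB (blowDB_finite qA κ (fun _ => 1)) (frzHead qA κ)).toFinset,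
        ∏ v ∈ Tset qB K γ₀, Nw (wOf κ γ₀ v) := by
  classical
  have hfinN := group_finite hrelB (blowDB_finite qA κ Nw) (frzHead qA κ)
  have hfin1 := group_finite hrelB (blowDB_finite qA κ (fun _ => 1)) (frzHead qA κ)
  rw [cnt, Set.ncard_eq_toFinset_card _ hfinN]
  rw [Finset.card_eq_sum_card_fiberwise (f := fun γ => baseκ κ ∘ γ) (t := hfin1.toFinset)
    (fun γ hγ => hfin1.mem_toFinset.2
      (base_mem_group hrelB hKA hKB hκinj hκK hκ0 (hfinN.mem_toFinset.1 hγ)))]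
  apply Finset.sum_congr rfl
  intro γ₀ hγ₀m
  have hγ₀ : γ₀ ∈ group qB (blowDB qA κ (fun _ => 1)) (frzHead qA κ) :=
    hfin1.mem_toFinset.1 hγ₀m
  rw [← fiber_ncard hrelB hKA hKB hκinj hκK hκ0 hN hγ₀]
  have hfinFib : {γ | γ ∈ group qB (blowDB qA κ Nw) (frzHead qA κ) ∧
      baseκ κ ∘ γ = γ₀}.Finite := hfinN.subset (fun γ hγ => hγ.1)
  rw [Set.ncard_eq_toFinset_card _ hfinFib]
  congr 1
  ext γ
  simp only [Finset.mem_filter, Set.Finite.mem_toFinset, Set.mem_setOf_eq]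

end FiberSetup

lemma digit_unique_range {B : ℕ} (n : ℕ) :
    ∀ f g : ℕ → ℕ, (∀ k, f k < B) → (∀ k, g k < B) →
    (∑ k ∈ Finset.range n, f k * B ^ k) = (∑ k ∈ Finset.range n, g k * B ^ k) →
    ∀ k < n, f k = g k := by
  induction n with
  | zero => intro f g _ _ _ k hk; omega
  | succ n ih =>
    intro f g hf hg h k hk
    rw [Finset.sum_range_succ' (fun k => f k * B ^ k) n,
      Finset.sum_range_succ' (fun k => g k * B ^ k) n] at h
    have hshape : ∀ u : ℕ → ℕ,
        (∑ i ∈ Finset.range n, u (i + 1) * B ^ (i + 1)) + u 0 * B ^ 0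
          = B * (∑ i ∈ Finset.range n, u (i + 1) * B ^ i) + u 0 := by
      intro u
      rw [Finset.mul_sum]
      congr 1
      · apply Finset.sum_congr rfl
        intro i _
        ring
      · ring
    rw [hshape f, hshape g] at h
    have hB : 0 < B := lt_of_le_of_lt (Nat.zero_le _) (hf 0)
    have h0 : f 0 = g 0 := by
      have hmod := congrArg (· % B) h
      simpa [Nat.mul_add_mod, Nat.mod_eq_of_lt (hf 0), Nat.mod_eq_of_lt (hg 0)] using hmod
    have h1 : (∑ i ∈ Finset.range n, f (i + 1) * B ^ i)
        = ∑ i ∈ Finset.range n, g (i + 1) * B ^ i := by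
      rw [h0] at h
      have := Nat.add_right_cancel h
      exact Nat.eq_of_mul_eq_mul_left hB this
    cases k with
    | zero => exact h0
    | succ k =>
      exact ih (fun k => f (k + 1)) (fun k => g (k + 1)) (fun k => hf (k + 1))
        (fun k => hg (k + 1)) h1 k (by omega)

lemma digit_unique_finset {B : ℕ} {U : Finset ℕ} {f g : ℕ → ℕ}
    (hf : ∀ k, f k < B) (hg : ∀ k, g k < B)
    (h : ∑ w ∈ U, f w * B ^ w = ∑ w ∈ U, g w * B ^ w) : ∀ w ∈ U, f w = g w := by
  classical
  set M := (U.sup id) + 1 with hM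
  have hUM : U ⊆ Finset.range M := by
    intro w hw
    rw [Finset.mem_range, hM]
    exact Nat.lt_succ_of_le (Finset.le_sup (f := id) hw)
  set F := fun k => if k ∈ U then f k else 0 with hF
  set G := fun k => if k ∈ U then g k else 0 with hG
  have hB : 0 < B := lt_of_le_of_lt (Nat.zero_le _) (hf 0)
  have hsum : ∀ (u : ℕ → ℕ), ∑ k ∈ Finset.range M, (if k ∈ U then u k else 0) * B ^ k
      = ∑ w ∈ U, u w * B ^ w := by
    intro u
    rw [← Finset.sum_subset hUM (fun x _ hx => by simp [hx])]
    apply Finset.sum_congr rfl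
    intro w hw
    simp [hw]
  have key := digit_unique_range M F G
    (fun k => by
      by_cases hk : k ∈ U
      · simpa [hF, hk] using hf k
      · simpa [hF, hk] using hB)
    (fun k => by
      by_cases hk : k ∈ U
      · simpa [hG, hk] using hg k
      · simpa [hG, hk] using hB)
    (by rw [hF, hG]; rw [hsum f, hsum g]; exact h)
  intro w hw
  have := key w (Finset.mem_range.1 (hUM hw))
  simpa [hF, hG, hw] using this

lemma pow_sum_counts {α β : Type*} [DecidableEq α] [DecidableEq β] {G1 : Finset α}
    {G2 : Finset β} {d1 : α → ℕ} {d2 : β → ℕ}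
    (h : ∀ N : ℕ, 1 ≤ N → ∑ γ ∈ G1, N ^ d1 γ = ∑ γ ∈ G2, N ^ d2 γ) (k : ℕ) :
    (G1.filter (fun γ => d1 γ = k)).card = (G2.filter (fun γ => d2 γ = k)).card := by
  classical
  set P1 : Polynomial ℚ := ∑ γ ∈ G1, Polynomial.X ^ d1 γ with hP1
  set P2 : Polynomial ℚ := ∑ γ ∈ G2, Polynomial.X ^ d2 γ with hP2
  have heval : ∀ (G : Finset α) (d : α → ℕ) (N : ℕ),
      Polynomial.eval ((N : ℚ)) (∑ γ ∈ G, Polynomial.X ^ d γ) = ((∑ γ ∈ G, N ^ d γ : ℕ) : ℚ) := by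
    intro G d N
    rw [Polynomial.eval_finset_sum]
    push_cast
    apply Finset.sum_congr rfl
    intro γ _
    simp
  have heval' : ∀ (G : Finset β) (d : β → ℕ) (N : ℕ),
      Polynomial.eval ((N : ℚ)) (∑ γ ∈ G, Polynomial.X ^ d γ) = ((∑ γ ∈ G, N ^ d γ : ℕ) : ℚ) := by
    intro G d N
    rw [Polynomial.eval_finset_sum]
    push_cast
    apply Finset.sum_congr rfl
    intro γ _
    simp
  have hPeq : P1 = P2 := by
    apply Polynomial.eq_of_infinite_eval_eq
    refine Set.infinite_of_injective_forall_mem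
      (f := fun n : ℕ => ((n + 1 : ℕ) : ℚ)) ?_ ?_
    · intro a b hab
      have : (a + 1 : ℕ) = (b + 1 : ℕ) := Nat.cast_injective hab
      omega
    · intro n
      show Polynomial.eval _ P1 = Polynomial.eval _ P2
      rw [hP1, hP2, heval, heval', h (n + 1) (by omega)]
  have hcoeff : ∀ (G : Finset α) (d : α → ℕ),
      (∑ γ ∈ G, (Polynomial.X : Polynomial ℚ) ^ d γ).coeff k
        = ((G.filter (fun γ => d γ = k)).card : ℚ) := by
    intro G d
    rw [Polynomial.finset_sum_coeff]
    rw [Finset.card_filter]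
    push_cast
    apply Finset.sum_congr rfl
    intro γ _
    rw [Polynomial.coeff_X_pow]
    by_cases hd : d γ = k
    · simp [hd]
    · simp [hd, Ne.symm hd]
  have hcoeff' : ∀ (G : Finset β) (d : β → ℕ),
      (∑ γ ∈ G, (Polynomial.X : Polynomial ℚ) ^ d γ).coeff k
        = ((G.filter (fun γ => d γ = k)).card : ℚ) := by
    intro G d
    rw [Polynomial.finset_sum_coeff]
    rw [Finset.card_filter]
    push_cast
    apply Finset.sum_congr rfl
    intro γ _
    rw [Polynomial.coeff_X_pow]
    by_cases hd : d γ = k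
    · simp [hd]
    · simp [hd, Ne.symm hd]
  have hfin := congrArg (fun P : Polynomial ℚ => P.coeff k) hPeq
  simp only [hP1, hP2] at hfin
  rw [hcoeff G1 d1, hcoeff' G2 d2] at hfin
  have this := hfin
  exact_mod_cast this

/-- The frozen assignment of `qA` is in its own frozen group. -/
lemma frz_mem_group (qA : AggQuery Rel) (hqA : IsCountQuery qA) (hrelA : IsRelational qA)
    (κ : Var × ℕ → ℚ) :
    (fun v => if v ∈ atomsVars qA.body.atoms then κ (v, 0) else 0)
      ∈ group qA (blowDB qA κ (fun _ => 1)) (frzHead qA κ) := by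
  set γ := fun v => if v ∈ atomsVars qA.body.atoms then κ (v, 0) else 0 with hγ
  refine ⟨⟨fun a ha => ?_, ?_⟩, fun v hv => ?_, ?_⟩
  · refine ⟨a, ha, rfl, ?_⟩
    rw [List.forall₂_map_right_iff]
    rw [List.forall₂_same]
    intro s hs
    cases s with
    | var v =>
      have hv : v ∈ atomsVars qA.body.atoms :=
        mem_atomsVars.2 ⟨a, ha, mem_termListVars.2 ⟨_, hs, by simp [Term.vars]⟩⟩
      exact ⟨0, Nat.zero_lt_one, by simp [hγ, Term.eval, hv]⟩
    | const c => rfl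
  · rw [hrelA]
    intro c hc
    exact absurd hc (Finset.notMem_empty c)
  · rw [bodyVars_of_relational hrelA] at hv
    simp [hγ, hv]
  · unfold frzHead
    apply List.map_congr_left
    intro v hv
    simp [hγ, head_vars_mem hqA hv]

/-- Main extraction: there is a frozen assignment of `qB` over the canonical database
of `qA` hitting each non-head frozen value exactly once and head values/constants
nowhere else. -/
lemma exists_nice (qA qB : AggQuery Rel)
    (hqA : IsCountQuery qA) (hrelA : IsRelational qA)
    (hqB : IsCountQuery qB) (hrelB : IsRelational qB)
    {K : Finset ℚ} (hKA : atomsConsts qA.body.atoms ⊆ K)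
    (hKB : atomsConsts qB.body.atoms ⊆ K)
    {κ : Var × ℕ → ℚ} (hκinj : Function.Injective κ) (hκK : ∀ p, κ p ∉ K)
    (hκ0 : ∀ p, κ p ≠ 0)
    (hcnt : ∀ D : Database Rel, FiniteDB D → ∀ t, cnt qA D t = cnt qB D t) :
    ∃ γ₀ ∈ group qB (blowDB qA κ (fun _ => 1)) (frzHead qA κ),
      ∀ w ∈ atomsVars qA.body.atoms,
        ((Tset qB K γ₀).filter (fun v => wOf κ γ₀ v = w)).card
          = (if w ∈ atomsVars qA.body.atoms \ qA.head.toFinset then 1 else 0) := by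
  classical
  set SA := atomsVars qA.body.atoms with hSA
  set HA := qA.head.toFinset with hHA
  set SB := atomsVars qB.body.atoms with hSB
  set HB := qB.head.toFinset with hHB
  set BB := (SA \ HA).card + (SB \ HB).card + 1 with hBB
  set GA := (group_finite hrelA (blowDB_finite qA κ (fun _ => 1)) (frzHead qA κ)).toFinset
    with hGA
  set GB := (group_finite hrelB (blowDB_finite qA κ (fun _ => 1)) (frzHead qA κ)).toFinset
    with hGB
  set dA := fun γ => ∑ v ∈ Tset qA K γ, BB ^ (wOf κ γ v) with hdA
  set dB := fun γ => ∑ v ∈ Tset qB K γ, BB ^ (wOf κ γ v) with hdB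
  have hsum : ∀ N : ℕ, 1 ≤ N → ∑ γ ∈ GA, N ^ dA γ = ∑ γ ∈ GB, N ^ dB γ := by
    intro N hN1
    set Nw := fun w => N ^ BB ^ w with hNw
    have hNw1 : ∀ w, 1 ≤ Nw w := fun w => Nat.one_le_pow _ _ (by omega)
    have h1 := blow_count (qA := qA) (qB := qA) hrelA hKA hKA hκinj hκK hκ0 hNw1
    have h2 := blow_count (qA := qA) (qB := qB) hrelB hKA hKB hκinj hκK hκ0 hNw1
    have h3 : cnt qA (blowDB qA κ Nw) (frzHead qA κ)
        = cnt qB (blowDB qA κ Nw) (frzHead qA κ) := hcnt _ (blowDB_finite qA κ Nw) _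
    rw [h1, h2] at h3
    have e1 : ∀ (q : AggQuery Rel) (G : Finset (Var → ℚ)),
        ∑ γ ∈ G, ∏ v ∈ Tset q K γ, Nw (wOf κ γ v)
          = ∑ γ ∈ G, N ^ (∑ v ∈ Tset q K γ, BB ^ (wOf κ γ v)) := by
      intro q G
      apply Finset.sum_congr rfl
      intro γ _
      rw [hNw]
      exact Finset.prod_pow_eq_pow_sum _ _ _
    rw [e1 qA, e1 qB] at h3
    exact h3
  set dstar := ∑ w ∈ SA \ HA, BB ^ w with hdstar
  have hcard := pow_sum_counts hsum dstar
  set γs := (fun v => if v ∈ SA then κ (v, 0) else 0) with hγs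
  have hγsmem : γs ∈ GA := (Set.Finite.mem_toFinset _).2 (frz_mem_group qA hqA hrelA κ)
  have hTγs : Tset qA K γs = SA \ HA := by
    unfold Tset
    rw [← hSA, ← hHA]
    apply Finset.filter_true_of_mem
    intro v hv
    have hvSA : v ∈ SA := (Finset.mem_sdiff.1 hv).1
    show (if v ∈ SA then κ (v, 0) else 0) ∉ K
    rw [if_pos hvSA]
    exact hκK (v, 0)
  have hwOfγs : ∀ v ∈ SA, wOf κ γs v = v := by
    intro v hv
    rw [wOf, hγs]
    simp only [if_pos hv]
    rw [Function.leftInverse_invFun hκinj (v, 0)]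
  have hdγs : dA γs = dstar := by
    rw [hdA]
    simp only
    rw [hTγs, hdstar]
    apply Finset.sum_congr rfl
    intro v hv
    rw [hwOfγs v (Finset.mem_sdiff.1 hv).1]
  have hA1 : 0 < (GA.filter (fun γ => dA γ = dstar)).card :=
    Finset.card_pos.2 ⟨γs, Finset.mem_filter.2 ⟨hγsmem, hdγs⟩⟩
  rw [hcard] at hA1
  obtain ⟨γ₀, hγ₀f⟩ := Finset.card_pos.1 hA1
  have hγ₀GB := (Finset.mem_filter.1 hγ₀f).1
  have hγ₀d : dB γ₀ = dstar := (Finset.mem_filter.1 hγ₀f).2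
  have hγ₀ : γ₀ ∈ group qB (blowDB qA κ (fun _ => 1)) (frzHead qA κ) :=
    (Set.Finite.mem_toFinset _).1 hγ₀GB
  refine ⟨γ₀, hγ₀, ?_⟩
  set m := fun w => ((Tset qB K γ₀).filter (fun v => wOf κ γ₀ v = w)).card with hm
  set gg := fun w : ℕ => if w ∈ SA \ HA then 1 else 0 with hgg
  have hmaps : ∀ v ∈ Tset qB K γ₀, wOf κ γ₀ v ∈ SA :=
    fun v hv => (frozen_value hKA hκinj hγ₀ hv).2
  have hsum1 : ∑ w ∈ SA, m w * BB ^ w = dB γ₀ := by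
    rw [hdB]
    simp only
    rw [← Finset.sum_fiberwise_of_maps_to hmaps (fun v => BB ^ (wOf κ γ₀ v))]
    apply Finset.sum_congr rfl
    intro w _
    rw [hm]
    simp only
    have hcongr : ∑ v ∈ (Tset qB K γ₀).filter (fun v => wOf κ γ₀ v = w), BB ^ (wOf κ γ₀ v)
        = ∑ _v ∈ (Tset qB K γ₀).filter (fun v => wOf κ γ₀ v = w), BB ^ w :=
      Finset.sum_congr rfl (fun v hv => by rw [(Finset.mem_filter.1 hv).2])
    rw [hcongr, Finset.sum_const, smul_eq_mul]
  have hsum2 : ∑ w ∈ SA, gg w * BB ^ w = dstar := by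
    rw [hdstar, hgg]
    have hcongr : ∑ w ∈ SA, (if w ∈ SA \ HA then 1 else 0) * BB ^ w
        = ∑ w ∈ SA, (if w ∈ SA \ HA then BB ^ w else 0) := by
      apply Finset.sum_congr rfl
      intro w _
      by_cases hw : w ∈ SA \ HA
      · simp [hw]
      · simp [hw]
    rw [hcongr, Finset.sum_ite_mem, Finset.inter_eq_right.2 Finset.sdiff_subset]
  have hmlt : ∀ w, m w < BB := by
    intro w
    have h1 : m w ≤ (Tset qB K γ₀).card := Finset.card_filter_le _ _
    have h2 : (Tset qB K γ₀).card ≤ (SB \ HB).card :=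
      Finset.card_le_card (Finset.filter_subset _ _)
    omega
  have hglt : ∀ w, gg w < BB := by
    intro w
    rw [hgg]
    by_cases hw : w ∈ SA \ HA
    · have hpos : 0 < (SA \ HA).card := Finset.card_pos.2 ⟨w, hw⟩
      simp only [if_pos hw]
      omega
    · simp only [if_neg hw]
      omega
  have hdig := digit_unique_finset hmlt hglt (by rw [hsum1, hsum2, hγ₀d])
  intro w hw
  exact hdig w hw

lemma exists_equiv_extend {S T : Finset Var} {f : Var → Var} (h : Set.BijOn f ↑S ↑T) :
    ∃ e : Var ≃ Var, ∀ x ∈ S, e x = f x := by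
  classical
  have h1 : ((↑S : Set Var)ᶜ).Infinite := S.finite_toSet.infinite_compl
  have h2 : ((↑T : Set Var)ᶜ).Infinite := T.finite_toSet.infinite_compl
  obtain ⟨d1⟩ := Set.countable_infinite_iff_nonempty_denumerable.1 ⟨Set.to_countable _, h1⟩
  obtain ⟨d2⟩ := Set.countable_infinite_iff_nonempty_denumerable.1 ⟨Set.to_countable _, h2⟩
  have e2 : ((↑S : Set Var)ᶜ : Set Var) ≃ ((↑T : Set Var)ᶜ : Set Var) :=
    (@Denumerable.eqv _ d1).trans (@Denumerable.eqv _ d2).symm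
  refine ⟨(Equiv.Set.sumCompl (↑S : Set Var)).symm.trans
    (((Set.BijOn.equiv f h).sumCongr e2).trans (Equiv.Set.sumCompl (↑T : Set Var))), ?_⟩
  intro x hx
  have hx' : x ∈ (↑S : Set Var) := hx
  simp only [Equiv.trans_apply]
  rw [Equiv.Set.sumCompl_symm_apply_of_mem hx']
  simp only [Equiv.sumCongr_apply, Sum.map_inl]
  rw [Equiv.Set.sumCompl_apply_inl]
  rfl

section NiceProps

variable {q' q : AggQuery Rel}
  (hq' : IsCountQuery q') (hrel' : IsRelational q')
  (hq : IsCountQuery q) (hrel : IsRelational q)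
  {K : Finset ℚ} (hK' : atomsConsts q'.body.atoms ⊆ K)
  (hK : atomsConsts q.body.atoms ⊆ K)
  {κ : Var × ℕ → ℚ} (hκinj : Function.Injective κ) (hκK : ∀ p, κ p ∉ K)
  (hκ0 : ∀ p, κ p ≠ 0)
  {γ₀ : Var → ℚ} (hγ₀ : γ₀ ∈ group q (blowDB q' κ (fun _ => 1)) (frzHead q' κ))

include hγ₀ in
lemma head_frozen : ∀ v ∈ q.head, ∃ u ∈ q'.head, γ₀ v = κ (u, 0) := by
  intro v hv
  have h1 : γ₀ v ∈ frzHead q' κ := by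
    rw [← hγ₀.2.2]
    exact List.mem_map_of_mem (f := γ₀) hv
  obtain ⟨u, hu, he⟩ := List.mem_map.1 h1
  exact ⟨u, hu, he.symm⟩

include hK' hκinj hγ₀ in
lemma val_all (hT : Tset q K γ₀ = atomsVars q.body.atoms \ q.head.toFinset) :
    ∀ v ∈ atomsVars q.body.atoms, γ₀ v = κ (wOf κ γ₀ v, 0) := by
  intro v hv
  by_cases hH : v ∈ q.head.toFinset
  · obtain ⟨u, _, he⟩ := head_frozen hγ₀ v (List.mem_toFinset.1 hH)
    have : wOf κ γ₀ v = u := by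
      rw [wOf, he, Function.leftInverse_invFun hκinj (u, 0)]
    rw [this, he]
  · exact (frozen_value hK' hκinj hγ₀ (hT ▸ Finset.mem_sdiff.2 ⟨hv, hH⟩)).1

include hq hK' hκinj hγ₀ in
lemma nice_head (hT : Tset q K γ₀ = atomsVars q.body.atoms \ q.head.toFinset) :
    q.head.map (wOf κ γ₀) = q'.head := by
  have h1 : q.head.map (fun v => κ (wOf κ γ₀ v, 0)) = q'.head.map (fun u => κ (u, 0)) := by
    have h2 : q.head.map (fun v => κ (wOf κ γ₀ v, 0)) = q.head.map γ₀ := by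
      apply List.map_congr_left
      intro v hv
      exact (val_all hK' hκinj hγ₀ hT v (head_vars_mem hq hv)).symm
    rw [h2, hγ₀.2.2]
    rfl
  have hinj0 : Function.Injective (fun u : Var => κ (u, 0)) := by
    intro a b hab
    exact congrArg Prod.fst (hκinj hab)
  apply List.map_injective_iff.2 hinj0
  rw [List.map_map]
  simpa [Function.comp_def] using h1

include hq hK' hK hκinj hκK hγ₀ in
lemma nice_atoms (hT : Tset q K γ₀ = atomsVars q.body.atoms \ q.head.toFinset) :
    ∀ a ∈ q.body.atoms, a.rename (wOf κ γ₀) ∈ q'.body.atoms := by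
  intro a ha
  obtain ⟨b, hb, hbrel, hF⟩ := hγ₀.1.1 a ha
  rw [List.forall₂_map_right_iff] at hF
  have hF' : List.Forall₂ (fun s t => s = Term.rename (wOf κ γ₀) t) b.args a.args := by
    refine forall₂_imp_mem hF (fun s hs t ht hR => ?_)
    cases t with
    | const c =>
      have hcK : c ∈ K := hK (const_mem_atomsConsts ha ht)
      cases s with
      | var w =>
        exfalso
        obtain ⟨i, _, hx⟩ := hR
        exact hκK (w, i) (by rw [← hx]; exact hcK)
      | const c' =>
        have : (Term.eval γ₀ (Term.const c) : ℚ) = c' := hR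
        have hcc : c = c' := this
        rw [hcc]
        rfl
    | var v =>
      have hvS : v ∈ atomsVars q.body.atoms :=
        mem_atomsVars.2 ⟨a, ha, mem_termListVars.2 ⟨_, ht, by simp [Term.vars]⟩⟩
      have hval := val_all hK' hκinj hγ₀ hT v hvS
      cases s with
      | const c' =>
        exfalso
        have : γ₀ v = c' := hR
        apply hκK (wOf κ γ₀ v, 0)
        rw [← hval, this]
        exact hK' (const_mem_atomsConsts hb hs)
      | var w =>
        obtain ⟨i, hi, hx⟩ := hR
        interval_cases i
        have : κ (w, 0) = κ (wOf κ γ₀ v, 0) := by rw [← hx, ← hval]; rfl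
        have hw : w = wOf κ γ₀ v := congrArg Prod.fst (hκinj this)
        rw [hw]
        rfl
  have hargs : b.args = a.args.map (Term.rename (wOf κ γ₀)) := by
    have := List.forall₂_map_right_iff.2 hF'
    rwa [List.forall₂_eq_eq_eq] at this
  have hba : b = a.rename (wOf κ γ₀) := by
    cases a with
    | mk arel aargs =>
      cases b with
      | mk brel bargs =>
        unfold Atom.rename
        simp only at hbrel hargs ⊢
        rw [hbrel, hargs]
  rw [← hba]
  exact hb

include hK' hκinj hγ₀ in
lemma nice_card
    (hdig : ∀ w ∈ atomsVars q'.body.atoms,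
      ((Tset q K γ₀).filter (fun v => wOf κ γ₀ v = w)).card
        = (if w ∈ atomsVars q'.body.atoms \ q'.head.toFinset then 1 else 0)) :
    (Tset q K γ₀).card = (atomsVars q'.body.atoms \ q'.head.toFinset).card := by
  classical
  rw [Finset.card_eq_sum_card_fiberwise
    (fun v hv => (frozen_value hK' hκinj hγ₀ hv).2 : ∀ v ∈ Tset q K γ₀,
      wOf κ γ₀ v ∈ atomsVars q'.body.atoms)]
  have h1 : ∀ w ∈ atomsVars q'.body.atoms,
      ((Tset q K γ₀).filter (fun v => wOf κ γ₀ v = w)).card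
        = (if w ∈ atomsVars q'.body.atoms \ q'.head.toFinset then 1 else 0) := hdig
  rw [Finset.sum_congr rfl h1, Finset.sum_ite_mem,
    Finset.inter_eq_right.2 Finset.sdiff_subset, Finset.sum_const, smul_eq_mul, mul_one]

end NiceProps

lemma rename_congr {f g : Var → Var} {a : Atom Rel} (h : ∀ v ∈ a.vars, f v = g v) :
    a.rename f = a.rename g := by
  unfold Atom.rename
  congr 1
  apply List.map_congr_left
  intro t ht
  cases t with
  | var v =>
    have : f v = g v := h v (mem_termListVars.2 ⟨_, ht, by simp [Term.vars]⟩)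
    simp [Term.rename, this]
  | const c => rfl

lemma map_rename_inj {f : Var → Var} {S : Finset Var} (hinj : Set.InjOn f ↑S) :
    ∀ (l1 l2 : List Term), (∀ v ∈ termListVars l1, v ∈ S) → (∀ v ∈ termListVars l2, v ∈ S) →
      l1.map (Term.rename f) = l2.map (Term.rename f) → l1 = l2 := by
  intro l1
  induction l1 with
  | nil =>
    intro l2 _ _ h
    cases l2 with
    | nil => rfl
    | cons t l => simp at h
  | cons t1 l1 ih =>
    intro l2 h1 h2 h
    cases l2 with
    | nil => simp at h
    | cons t2 l2 =>
      simp only [List.map_cons, List.cons.injEq] at h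
      have hv1 : ∀ v ∈ termListVars l1, v ∈ S := by
        intro v hv
        apply h1
        simp only [termListVars, List.foldr] at hv ⊢
        exact Finset.mem_union_right _ hv
      have hv2 : ∀ v ∈ termListVars l2, v ∈ S := by
        intro v hv
        apply h2
        simp only [termListVars, List.foldr] at hv ⊢
        exact Finset.mem_union_right _ hv
      have ht : t1 = t2 := by
        cases t1 with
        | var v1 =>
          cases t2 with
          | var v2 =>
            have hfv : f v1 = f v2 := by
              have := h.1
              simpa [Term.rename] using this
            have hv1S : v1 ∈ S := h1 v1 (by
              simp [termListVars, Term.vars])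
            have hv2S : v2 ∈ S := h2 v2 (by
              simp [termListVars, Term.vars])
            rw [hinj hv1S hv2S hfv]
          | const c => simp [Term.rename] at h
        | const c =>
          cases t2 with
          | var v2 => simp [Term.rename] at h
          | const c' =>
            have := h.1
            simpa [Term.rename] using this
      rw [ht, ih l2 hv1 hv2 h.2]

lemma rename_injOn_atoms {R : Finset (Atom Rel)} {f : Var → Var}
    (hinj : Set.InjOn f ↑(atomsVars R)) : Set.InjOn (Atom.rename f) (↑R : Set (Atom Rel)) := by
  intro a ha b hb h
  unfold Atom.rename at h
  cases a with
  | mk arel aargs =>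
    cases b with
    | mk brel bargs =>
      simp only [Atom.mk.injEq] at h ⊢
      refine ⟨h.1, ?_⟩
      apply map_rename_inj hinj aargs bargs
      · intro v hv
        exact mem_atomsVars.2 ⟨⟨arel, aargs⟩, ha, hv⟩
      · intro v hv
        exact mem_atomsVars.2 ⟨⟨brel, bargs⟩, hb, hv⟩
      · exact h.2

lemma nice_bijOn {q' q : AggQuery Rel} (hq' : IsCountQuery q') (hq : IsCountQuery q)
    {K : Finset ℚ} (hK' : atomsConsts q'.body.atoms ⊆ K)
    {κ : Var × ℕ → ℚ} (hκinj : Function.Injective κ)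
    {γ₀ : Var → ℚ} (hγ₀ : γ₀ ∈ group q (blowDB q' κ (fun _ => 1)) (frzHead q' κ))
    (hdig : ∀ w ∈ atomsVars q'.body.atoms,
      ((Tset q K γ₀).filter (fun v => wOf κ γ₀ v = w)).card
        = (if w ∈ atomsVars q'.body.atoms \ q'.head.toFinset then 1 else 0))
    (hT : Tset q K γ₀ = atomsVars q.body.atoms \ q.head.toFinset)
    (hfhead : q.head.map (wOf κ γ₀) = q'.head)
    {g : Var → Var} (hgf : ∀ x ∈ q.head, g (wOf κ γ₀ x) = x) :
    Set.BijOn (wOf κ γ₀) ↑(atomsVars q.body.atoms) ↑(atomsVars q'.body.atoms) := by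
  classical
  have hTfree : ∀ v ∈ Tset q K γ₀,
      wOf κ γ₀ v ∈ atomsVars q'.body.atoms \ q'.head.toFinset := by
    intro v hv
    have hS' := (frozen_value hK' hκinj hγ₀ hv).2
    by_contra hcon
    have h0 := hdig _ hS'
    rw [if_neg hcon] at h0
    have hmem : v ∈ (Tset q K γ₀).filter (fun x => wOf κ γ₀ x = wOf κ γ₀ v) :=
      Finset.mem_filter.2 ⟨hv, rfl⟩
    have := Finset.card_pos.2 ⟨v, hmem⟩
    omega
  have hheadmem : ∀ v ∈ q.head, wOf κ γ₀ v ∈ q'.head := by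
    intro v hv
    rw [← hfhead]
    exact List.mem_map_of_mem hv
  have hTmem : ∀ v, v ∈ atomsVars q.body.atoms → v ∉ q.head.toFinset →
      v ∈ Tset q K γ₀ := by
    intro v h1 h2
    rw [hT]
    exact Finset.mem_sdiff.2 ⟨h1, h2⟩
  refine ⟨?_, ?_, ?_⟩
  · intro v hv
    have hv' : v ∈ atomsVars q.body.atoms := hv
    by_cases hH : v ∈ q.head.toFinset
    · exact head_vars_mem hq' (hheadmem v (List.mem_toFinset.1 hH))
    · exact (Finset.mem_sdiff.1 (hTfree v (hTmem v hv' hH))).1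
  · intro u hu v hv he
    have hu' : u ∈ atomsVars q.body.atoms := hu
    have hv' : v ∈ atomsVars q.body.atoms := hv
    by_cases huH : u ∈ q.head.toFinset <;> by_cases hvH : v ∈ q.head.toFinset
    · have h1 := hgf u (List.mem_toFinset.1 huH)
      have h2 := hgf v (List.mem_toFinset.1 hvH)
      rw [← h1, ← h2, he]
    · exfalso
      have h1 : wOf κ γ₀ u ∈ q'.head.toFinset :=
        List.mem_toFinset.2 (hheadmem u (List.mem_toFinset.1 huH))
      have h2 := (Finset.mem_sdiff.1 (hTfree v (hTmem v hv' hvH))).2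
      rw [he] at h1
      exact h2 h1
    · exfalso
      have h1 : wOf κ γ₀ v ∈ q'.head.toFinset :=
        List.mem_toFinset.2 (hheadmem v (List.mem_toFinset.1 hvH))
      have h2 := (Finset.mem_sdiff.1 (hTfree u (hTmem u hu' huH))).2
      rw [← he] at h1
      exact h2 h1
    · have huT := hTmem u hu' huH
      have hvT := hTmem v hv' hvH
      have hfu := hTfree u huT
      have hc := hdig _ (Finset.mem_sdiff.1 hfu).1
      rw [if_pos hfu] at hc
      have hle : ((Tset q K γ₀).filter (fun x => wOf κ γ₀ x = wOf κ γ₀ u)).card ≤ 1 :=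
        le_of_eq hc
      exact Finset.card_le_one.1 hle u (Finset.mem_filter.2 ⟨huT, rfl⟩) v
        (Finset.mem_filter.2 ⟨hvT, he.symm⟩)
  · intro w hw
    have hw' : w ∈ atomsVars q'.body.atoms := hw
    by_cases hH' : w ∈ q'.head.toFinset
    · have : w ∈ q.head.map (wOf κ γ₀) := by
        rw [hfhead]
        exact List.mem_toFinset.1 hH'
      obtain ⟨v, hv, rfl⟩ := List.mem_map.1 this
      exact ⟨v, head_vars_mem hq hv, rfl⟩
    · have hc := hdig w hw'
      rw [if_pos (Finset.mem_sdiff.2 ⟨hw', hH'⟩)] at hc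
      have hpos : 0 < ((Tset q K γ₀).filter (fun v => wOf κ γ₀ v = w)).card := by omega
      obtain ⟨v, hvf⟩ := Finset.card_pos.1 hpos
      obtain ⟨hvT, hfv⟩ := Finset.mem_filter.1 hvf
      exact ⟨v, Tset_subset_SB hvT, hfv⟩

lemma equiv_of_iso {q q' : AggQuery Rel} (hq : IsCountQuery q) (hq' : IsCountQuery q')
    (hrel : IsRelational q) (hrel' : IsRelational q') (e : Var ≃ Var)
    (hhead : q.head.map (fun x => e x) = q'.head)
    (hatoms : q.body.atoms.image (Atom.rename (fun x => e x)) = q'.body.atoms) :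
    q.equiv q' := by
  have hhead' : q'.head.map (fun x => e.symm x) = q.head := by
    rw [← hhead, List.map_map]
    have : (fun x => e.symm x) ∘ (fun x => e x) = id := by funext x; simp
    rw [this, List.map_id]
  have hatoms' : q'.body.atoms.image (Atom.rename (fun x => e.symm x)) = q.body.atoms := by
    rw [← hatoms, Finset.image_image]
    have : (Atom.rename fun x => e.symm x) ∘ (Atom.rename fun x => e x)
        = (id : Atom Rel → Atom Rel) := by
      funext a
      simp only [Function.comp_apply, atom_rename_rename, id_eq]
      have : ((fun x => e.symm x) ∘ fun x => e x) = id := by funext x; simp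
      rw [this, atom_rename_id]
    rw [this, Finset.image_id]
  intro D hD
  have himg : ∀ t, group q' D t = (fun γ => γ ∘ ⇑e.symm) '' group q D t := by
    intro t
    ext γ'
    constructor
    · intro hγ'
      refine ⟨γ' ∘ ⇑e, ?_, ?_⟩
      · have := mem_group_comp hrel' hrel e.symm hhead' hatoms' hγ'
        simpa using this
      · funext x; simp
    · rintro ⟨γ, hγ, rfl⟩
      exact mem_group_comp hrel hrel' e hhead hatoms hγ
  have hcnt : ∀ t, cnt q' D t = cnt q D t := by
    intro t
    rw [cnt, himg t, Set.ncard_image_of_injective _ ?_, cnt]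
    intro γ1 γ2 h
    funext x
    have := congrFun h (e x)
    simpa using this
  ext ⟨t, c⟩
  rw [mem_result_iff hq hrel hD, mem_result_iff hq' hrel' hD, hcnt t, himg t,
    Set.image_nonempty]


end IsoProof

/-- Two relational COUNT-queries are equivalent if and only if
they are isomorphic, i.e., some bijection `e` of the variables maps the head of
`q` to the head of `q'` and the relational atoms of `q` onto those of `q'`. -/
theorem relational_count_equiv_iff_iso {Rel : Type} [DecidableEq Rel]
    (q q' : AggQuery Rel) (hq : IsCountQuery q) (hq' : IsCountQuery q')
    (hr : IsRelational q) (hr' : IsRelational q') :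
    q.equiv q' ↔
      ∃ e : Var ≃ Var, q.head.map (fun x => e x) = q'.head ∧
        q.body.atoms.image (Atom.rename (fun x => e x)) = q'.body.atoms := by
  constructor
  · intro heq
    classical
    set K := atomsConsts q.body.atoms ∪ atomsConsts q'.body.atoms with hKdef
    have hKq : atomsConsts q.body.atoms ⊆ K := Finset.subset_union_left
    have hKq' : atomsConsts q'.body.atoms ⊆ K := Finset.subset_union_right
    set c0 := (insert (0:ℚ) K).min' (Finset.insert_nonempty _ _) with hc0
    set κ := fun p : Var × ℕ => c0 - 1 - (Nat.pair p.1 p.2 : ℚ) with hκdef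
    have hκlt : ∀ (p : Var × ℕ) (x : ℚ), x ∈ insert (0:ℚ) K → κ p < x := by
      intro p x hx
      have h1 : c0 ≤ x := Finset.min'_le _ x hx
      have h2 : (0:ℚ) ≤ (Nat.pair p.1 p.2 : ℚ) := Nat.cast_nonneg _
      rw [hκdef]
      simp only
      linarith
    have hκinj : Function.Injective κ := by
      rintro ⟨a1, a2⟩ ⟨b1, b2⟩ h
      rw [hκdef] at h
      simp only at h
      have h2 : ((Nat.pair a1 a2 : ℕ) : ℚ) = ((Nat.pair b1 b2 : ℕ) : ℚ) := by linarith
      have h3 : Nat.pair a1 a2 = Nat.pair b1 b2 := Nat.cast_injective h2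
      have h4 := congrArg Nat.unpair h3
      rw [Nat.unpair_pair, Nat.unpair_pair] at h4
      exact h4
    have hκK : ∀ p, κ p ∉ K := fun p hp =>
      absurd (hκlt p (κ p) (Finset.mem_insert_of_mem hp)) (lt_irrefl _)
    have hκ0 : ∀ p, κ p ≠ 0 := fun p =>
      ne_of_lt (hκlt p 0 (Finset.mem_insert_self _ _))
    have hcnt : ∀ D : Database Rel, FiniteDB D → ∀ t, cnt q D t = cnt q' D t :=
      fun D hD t => cnt_eq_of_equiv hq hq' hr hr' heq hD t
    have hcnt' : ∀ D : Database Rel, FiniteDB D → ∀ t, cnt q' D t = cnt q D t :=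
      fun D hD t => (hcnt D hD t).symm
    obtain ⟨γ₀, hγ₀, hdig⟩ := exists_nice q' q hq' hr' hq hr hKq' hKq hκinj hκK hκ0 hcnt'
    obtain ⟨δ₀, hδ₀, hdig'⟩ := exists_nice q q' hq hr hq' hr' hKq hKq' hκinj hκK hκ0 hcnt
    have hc1 := nice_card hKq' hκinj hγ₀ hdig
    have hc2 := nice_card hKq hκinj hδ₀ hdig'
    have hsub1 : Tset q K γ₀ ⊆ atomsVars q.body.atoms \ q.head.toFinset :=
      Finset.filter_subset _ _
    have hsub2 : Tset q' K δ₀ ⊆ atomsVars q'.body.atoms \ q'.head.toFinset :=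
      Finset.filter_subset _ _
    have hsize1 := Finset.card_le_card hsub1
    have hsize2 := Finset.card_le_card hsub2
    have hT1 : Tset q K γ₀ = atomsVars q.body.atoms \ q.head.toFinset :=
      Finset.eq_of_subset_of_card_le hsub1 (by omega)
    have hT2 : Tset q' K δ₀ = atomsVars q'.body.atoms \ q'.head.toFinset :=
      Finset.eq_of_subset_of_card_le hsub2 (by omega)
    have hfhead : q.head.map (wOf κ γ₀) = q'.head := nice_head hq hKq' hκinj hγ₀ hT1
    have hghead : q'.head.map (wOf κ δ₀) = q.head := nice_head hq' hKq hκinj hδ₀ hT2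
    have hfatoms := nice_atoms hq hKq' hKq hκinj hκK hγ₀ hT1
    have hgatoms := nice_atoms hq' hKq hKq' hκinj hκK hδ₀ hT2
    have hgf : ∀ x ∈ q.head, wOf κ δ₀ (wOf κ γ₀ x) = x := by
      have h1 : q.head.map (wOf κ δ₀ ∘ wOf κ γ₀) = q.head.map id := by
        rw [← List.map_map, hfhead, hghead, List.map_id]
      rw [List.map_eq_map_iff] at h1
      intro x hx
      simpa using h1 x hx
    have hfg : ∀ x ∈ q'.head, wOf κ γ₀ (wOf κ δ₀ x) = x := by
      have h1 : q'.head.map (wOf κ γ₀ ∘ wOf κ δ₀) = q'.head.map id := by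
        rw [← List.map_map, hghead, hfhead, List.map_id]
      rw [List.map_eq_map_iff] at h1
      intro x hx
      simpa using h1 x hx
    have hbijf := nice_bijOn hq' hq hKq' hκinj hγ₀ hdig hT1 hfhead hgf
    have hbijg := nice_bijOn hq hq' hKq hκinj hδ₀ hdig' hT2 hghead hfg
    have hinjf : Set.InjOn (Atom.rename (wOf κ γ₀)) (↑q.body.atoms : Set (Atom Rel)) :=
      rename_injOn_atoms hbijf.injOn
    have hinjg : Set.InjOn (Atom.rename (wOf κ δ₀)) (↑q'.body.atoms : Set (Atom Rel)) :=
      rename_injOn_atoms hbijg.injOn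
    have hsubf : q.body.atoms.image (Atom.rename (wOf κ γ₀)) ⊆ q'.body.atoms := by
      intro a' ha'
      obtain ⟨a, ha, rfl⟩ := Finset.mem_image.1 ha'
      exact hfatoms a ha
    have hsubg : q'.body.atoms.image (Atom.rename (wOf κ δ₀)) ⊆ q.body.atoms := by
      intro a' ha'
      obtain ⟨a, ha, rfl⟩ := Finset.mem_image.1 ha'
      exact hgatoms a ha
    have hcardf : (q.body.atoms.image (Atom.rename (wOf κ γ₀))).card = q.body.atoms.card :=
      Finset.card_image_of_injOn hinjf
    have hcardg : (q'.body.atoms.image (Atom.rename (wOf κ δ₀))).card = q'.body.atoms.card :=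
      Finset.card_image_of_injOn hinjg
    have hA := Finset.card_le_card hsubf
    have hB := Finset.card_le_card hsubg
    have himgf : q.body.atoms.image (Atom.rename (wOf κ γ₀)) = q'.body.atoms :=
      Finset.eq_of_subset_of_card_le hsubf (by omega)
    obtain ⟨e, he⟩ := exists_equiv_extend hbijf
    refine ⟨e, ?_, ?_⟩
    · rw [← hfhead]
      apply List.map_congr_left
      intro v hv
      exact he v (head_vars_mem hq hv)
    · rw [← himgf]
      apply Finset.image_congr
      intro a ha
      apply rename_congr
      intro v hv
      exact he v (vars_subset_of_mem ha hv)
  · rintro ⟨e, hh, ha⟩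
    exact equiv_of_iso hq hq' hr hr' e hh ha
end CQ
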